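/- Let Φ be a real number with Φ² = Φ + 1 and let w = (w₁, …, wₙ) be a nonempty word of integers. Then the (2,2) entry (row 2, column 2) of M(Φ, w) equals P·Φ + Q, where P = Σ_{s ≪₃ w} χ(n − |s|) · F_{|s|} · m_s and Q = Σ_{s ≪₃ w} χ(n − |s|) · F_{|s|−1} · m_s, the sums ranging over all subwords s of w with s ≪₃ w. -/

import Mathlib

open Matrix

noncomputable section

/-- The matrix `S = !![0, -1; 1, 0]` over `ℝ`. -/
def S : Matrix (Fin 2) (Fin 2) ℝ := !![0, -1; 1, 0]

/-- The matrix `T(λ) = !![1, λ; 0, 1]` over `ℝ`. -/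
def T (lam : ℝ) : Matrix (Fin 2) (Fin 2) ℝ := !![1, lam; 0, 1]

/-- For a nonempty word `w = (w₁, …, wₙ)` of integers,
`M lam w = T(λ)^{w₁} · S · T(λ)^{w₂} · S · ⋯ · S · T(λ)^{wₙ}`. -/
def M (lam : ℝ) : List ℤ → Matrix (Fin 2) (Fin 2) ℝ
  | [] => 1
  | a :: t => T lam ^ a * (t.map fun b => S * T lam ^ b).prod

/-- The 4-periodic function with `χ(0) = 0, χ(1) = 1, χ(2) = 0, χ(3) = -1`
(the nontrivial Dirichlet character mod 4, extended to all integers). -/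
def chi (m : ℤ) : ℤ := if m % 4 = 1 then 1 else if m % 4 = 3 then -1 else 0

/-- The Fibonacci numbers, extended so that `F₋₁ = 1` (the only negative index used). -/
def fibz (m : ℤ) : ℤ := if m < 0 then 1 else (Nat.fib m.toNat : ℤ)

/-- A subword of `(w₁, …, wₙ)` is encoded by its set `J` of (0-based) positions;
the 1-based indices `j₁ < ⋯ < j_m` are the sorted elements of `J` plus one.
`ll3 J` says `jᵢ ≡ i - 1 (mod 2)`, i.e. `s ≪₃ w`, for all `i` (1-based), stated here in 0-based form. -/
def ll3 {n : ℕ} (J : Finset (Fin n)) : Prop :=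
  ∀ i : ℕ, ∀ hi : i < (J.sort (· ≤ ·)).length,
    ((J.sort (· ≤ ·)).get ⟨i, hi⟩).val % 2 = (i + 1) % 2

instance {n : ℕ} : DecidablePred (ll3 (n := n)) := fun _ =>
  Nat.decidableBallLT _ _

/-! ### Auxiliary definitions -/

/-- `ll1 J` : `jᵢ ≡ i (mod 2)` (1-based), stated in 0-based form. -/
def ll1 {n : ℕ} (J : Finset (Fin n)) : Prop :=
  ∀ i : ℕ, ∀ hi : i < (J.sort (· ≤ ·)).length,
    ((J.sort (· ≤ ·)).get ⟨i, hi⟩).val % 2 = i % 2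

instance {n : ℕ} : DecidablePred (ll1 (n := n)) := fun _ =>
  Nat.decidableBallLT _ _

/-- The `≪₃` sum with `Φ^{|s|}` coefficients. -/
def VV (Φ : ℝ) {n : ℕ} (w : Fin n → ℤ) : ℝ :=
  ∑ J ∈ Finset.univ.filter (fun J : Finset (Fin n) => ll3 J),
    (chi ((n : ℤ) - J.card) : ℝ) * Φ ^ (J.card) * ((∏ j ∈ J, w j : ℤ) : ℝ)

/-- The `≪₁` sum with `Φ^{|s|}` coefficients. -/
def UU (Φ : ℝ) {n : ℕ} (w : Fin n → ℤ) : ℝ :=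
  ∑ J ∈ Finset.univ.filter (fun J : Finset (Fin n) => ll1 J),
    (chi ((n : ℤ) + 1 - J.card) : ℝ) * Φ ^ (J.card) * ((∏ j ∈ J, w j : ℤ) : ℝ)

/-! ### chi and fibz lemmas -/

lemma chi_add_two (m : ℤ) : chi (m + 2) = - chi m := by
  unfold chi
  have h4 : m % 4 = 0 ∨ m % 4 = 1 ∨ m % 4 = 2 ∨ m % 4 = 3 := by omega
  rcases h4 with h | h | h | h
  · have h2 : (m + 2) % 4 = 2 := by omega
    simp [h, h2]
  · have h2 : (m + 2) % 4 = 3 := by omega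
    simp [h, h2]
  · have h2 : (m + 2) % 4 = 0 := by omega
    simp [h, h2]
  · have h2 : (m + 2) % 4 = 1 := by omega
    simp [h, h2]

lemma fibz_natCast (k : ℕ) : fibz (k : ℤ) = (Nat.fib k : ℤ) := by
  rw [fibz, if_neg (by omega)]
  simp

lemma fibz_neg_one : fibz (-1) = 1 := by rw [fibz, if_pos (by omega)]

lemma fib_aux (k : ℕ) : (Nat.fib (k + 1) : ℤ) = fibz (k : ℤ) + fibz ((k : ℤ) - 1) := by
  cases k with
  | zero =>
    show (1 : ℤ) = fibz 0 + fibz (0 - 1)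
    rw [show ((0 : ℤ) - 1) = -1 by ring, fibz_neg_one, show ((0:ℤ)) = ((0:ℕ):ℤ) by simp,
      fibz_natCast]
    simp
  | succ k =>
    have h2 : ((k + 1 : ℕ) : ℤ) - 1 = ((k : ℕ) : ℤ) := by push_cast; ring
    rw [show ((k+1:ℕ):ℤ) = (((k+1:ℕ)):ℤ) from rfl, fibz_natCast, h2, fibz_natCast,
      Nat.fib_add_two]
    push_cast; ring

lemma phi_pow (Φ : ℝ) (hΦ : Φ ^ 2 = Φ + 1) (k : ℕ) :
    Φ ^ k = (fibz (k : ℤ) : ℝ) * Φ + (fibz ((k : ℤ) - 1) : ℝ) := by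
  induction k using Nat.twoStepInduction with
  | zero =>
    rw [show ((0:ℕ):ℤ) - 1 = -1 by ring, fibz_neg_one]
    norm_num [fibz]
  | one =>
    rw [show ((1:ℕ):ℤ) - 1 = ((0:ℕ):ℤ) by ring, fibz_natCast, fibz_natCast]
    norm_num
  | more k ih2 ih1 =>
    have hrec : Φ ^ (k + 2) = Φ ^ (k + 1) + Φ ^ k := by
      have h : Φ ^ (k + 2) = Φ ^ k * Φ ^ 2 := by ring
      rw [h, hΦ]; ring
    have c2 : ((k + 2 : ℕ) : ℤ) - 1 = ((k + 1 : ℕ) : ℤ) := by push_cast; ring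
    have c3 : ((k + 1 : ℕ) : ℤ) - 1 = ((k : ℕ) : ℤ) := by push_cast; ring
    rw [hrec, ih1, ih2, c2, c3, fibz_natCast, fibz_natCast, fibz_natCast]
    have h4 := fib_aux (k + 1)
    have h5 := fib_aux k
    rw [c3, fibz_natCast, fibz_natCast] at h4
    rw [fibz_natCast] at h5
    have h4' : (Nat.fib (k + 2) : ℝ) = (Nat.fib (k+1) : ℝ) + (Nat.fib k : ℝ) := by
      exact_mod_cast h4
    have h5' : ((Nat.fib (k + 1) : ℤ) : ℝ) = ((Nat.fib k : ℤ) : ℝ) + (fibz ((k:ℤ) - 1) : ℝ) := by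
      exact_mod_cast h5
    push_cast at h4' h5' ⊢
    rw [h4', h5']
    ring

/-! ### sort lemmas -/

lemma sort_map_succ {n : ℕ} (J : Finset (Fin n)) :
    ((J.map (Fin.succEmb n)).sort (· ≤ ·)) = (J.sort (· ≤ ·)).map Fin.succ := by
  rw [Finset.sort, Finset.sort, Finset.map_val]
  exact (Multiset.map_sort (r := (· ≤ ·)) (r' := (· ≤ ·)) (f := Fin.succ) (s := J.val)
    (fun a _ b _ => Fin.succ_le_succ_iff.symm)).symm

lemma zero_not_mem_map {n : ℕ} (J : Finset (Fin n)) :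
    (0 : Fin (n + 1)) ∉ J.map (Fin.succEmb n) := by
  simp only [Finset.mem_map, not_exists]
  rintro x hx
  exact Fin.succ_ne_zero x hx.2

lemma sort_insert_zero {n : ℕ} (J : Finset (Fin n)) :
    ((insert (0 : Fin (n + 1)) (J.map (Fin.succEmb n))).sort (· ≤ ·))
      = 0 :: (J.sort (· ≤ ·)).map Fin.succ := by
  rw [Finset.sort_insert (r := (· ≤ ·)) (fun b _ => Fin.zero_le b) (zero_not_mem_map J),
    sort_map_succ]

lemma ll3_map_iff {n : ℕ} (J : Finset (Fin n)) :
    ll3 (J.map (Fin.succEmb n)) ↔ ll1 J := by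
  unfold ll3 ll1
  rw [sort_map_succ]
  simp only [List.get_eq_getElem, List.length_map, List.getElem_map, Fin.val_succ]
  constructor
  · intro h i hi; have := h i hi; omega
  · intro h i hi; have := h i hi; omega

lemma ll1_map_iff {n : ℕ} (J : Finset (Fin n)) :
    ll1 (J.map (Fin.succEmb n)) ↔ ll3 J := by
  unfold ll3 ll1
  rw [sort_map_succ]
  simp only [List.get_eq_getElem, List.length_map, List.getElem_map, Fin.val_succ]
  constructor
  · intro h i hi; have := h i hi; omega
  · intro h i hi; have := h i hi; omega

lemma not_ll3_insert {n : ℕ} (J : Finset (Fin n)) :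
    ¬ ll3 (insert (0 : Fin (n + 1)) (J.map (Fin.succEmb n))) := by
  unfold ll3
  rw [sort_insert_zero]
  intro h
  have := h 0 (by simp)
  simp at this

lemma ll1_insert_iff {n : ℕ} (J : Finset (Fin n)) :
    ll1 (insert (0 : Fin (n + 1)) (J.map (Fin.succEmb n))) ↔ ll1 J := by
  unfold ll1
  rw [sort_insert_zero]
  simp only [List.get_eq_getElem, List.length_cons, List.length_map]
  constructor
  · intro h i hi
    have := h (i + 1) (by omega)
    simp only [List.getElem_cons_succ, List.getElem_map, Fin.val_succ] at this
    omega
  · intro h i hi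
    cases i with
    | zero => simp
    | succ i =>
      have := h i (by omega)
      simp only [List.getElem_cons_succ, List.getElem_map, Fin.val_succ]
      omega

/-! ### the splitting of sums over subsets of `Fin (n+1)` -/

lemma sum_powerset_map {α β R : Type*} [DecidableEq β] [AddCommMonoid R]
    (e : α ↪ β) (s : Finset α) (f : Finset β → R) :
    ∑ t ∈ (s.map e).powerset, f t = ∑ u ∈ s.powerset, f (u.map e) := by
  classical
  have himg : s.powerset.image (fun u => u.map e) = (s.map e).powerset := by
    ext t
    simp only [Finset.mem_image, Finset.mem_powerset]
    constructor
    · rintro ⟨u, hu, rfl⟩; exact Finset.map_subset_map.2 hu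
    · intro ht
      refine ⟨s.filter (fun a => e a ∈ t), Finset.filter_subset _ _, ?_⟩
      ext b
      simp only [Finset.mem_map, Finset.mem_filter]
      constructor
      · rintro ⟨a, ⟨_, h2⟩, rfl⟩; exact h2
      · intro hb
        obtain ⟨a, ha, rfl⟩ := Finset.mem_map.1 (ht hb)
        exact ⟨a, ⟨ha, hb⟩, rfl⟩
  rw [← himg, Finset.sum_image (fun x _ y _ h => Finset.map_injective e h)]

lemma sum_split {R : Type*} [AddCommMonoid R] {n : ℕ} (f : Finset (Fin (n + 1)) → R) :
    ∑ J : Finset (Fin (n + 1)), f J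
      = (∑ J : Finset (Fin n), f (J.map (Fin.succEmb n)))
        + ∑ J : Finset (Fin n), f (insert 0 (J.map (Fin.succEmb n))) := by
  classical
  have huniv : (Finset.univ : Finset (Fin (n + 1)))
      = insert 0 (Finset.univ.map (Fin.succEmb n)) := by
    apply Finset.eq_univ_iff_forall.2 ?_ |>.symm
    intro x
    rcases Fin.eq_zero_or_eq_succ x with h | ⟨y, rfl⟩
    · simp [h]
    · exact Finset.mem_insert_of_mem (Finset.mem_map_of_mem _ (Finset.mem_univ y))
  have h0 : (Finset.univ : Finset (Finset (Fin (n + 1)))) =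
      (insert (0 : Fin (n+1)) (Finset.univ.map (Fin.succEmb n))).powerset := by
    rw [← huniv, Finset.powerset_univ]
  rw [h0, Finset.sum_powerset_insert (zero_not_mem_map _), sum_powerset_map, sum_powerset_map,
    Finset.powerset_univ]

/-! ### recursions for UU and VV -/

lemma VV_empty (Φ : ℝ) (w : Fin 0 → ℤ) : VV Φ w = 0 := by
  unfold VV
  apply Finset.sum_eq_zero
  intro J _
  have hJ : J = (∅ : Finset (Fin 0)) := Finset.eq_empty_of_forall_notMem (fun x _ => x.elim0)
  subst hJ
  norm_num [chi]

lemma UU_empty (Φ : ℝ) (w : Fin 0 → ℤ) : UU Φ w = 1 := by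
  unfold UU
  have hE : ∀ J : Finset (Fin 0), J = ∅ :=
    fun J => Finset.eq_empty_of_forall_notMem (fun x _ => x.elim0)
  have hll : ll1 (∅ : Finset (Fin 0)) := by
    intro i hi
    rw [Finset.sort_empty] at hi
    exact absurd hi (by simp)
  have hfil : Finset.univ.filter (fun J : Finset (Fin 0) => ll1 J) = {∅} := by
    ext J
    rw [hE J]
    simp [hll]
    exact (hE default).symm
  rw [hfil, Finset.sum_singleton]
  norm_num [chi]

lemma prod_cons_map {n : ℕ} (a : ℤ) (v : Fin n → ℤ) (J : Finset (Fin n)) :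
    (∏ j ∈ J.map (Fin.succEmb n), Fin.cons a v j) = ∏ j ∈ J, v j := by
  rw [Finset.prod_map]
  refine Finset.prod_congr rfl fun j _ => ?_
  rw [Fin.coe_succEmb]
  exact Fin.cons_succ (α := fun _ => ℤ) a v j

lemma VV_cons (Φ : ℝ) {n : ℕ} (a : ℤ) (v : Fin n → ℤ) :
    VV Φ (Fin.cons a v) = UU Φ v := by
  classical
  unfold VV UU
  rw [Finset.sum_filter, Finset.sum_filter, sum_split]
  rw [Finset.sum_ite_of_false (fun J _ => not_ll3_insert J), Finset.sum_const_zero, add_zero]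
  refine Finset.sum_congr rfl fun J _ => ?_
  refine if_congr (ll3_map_iff J) ?_ rfl
  rw [Finset.card_map, prod_cons_map]
  push_cast
  ring_nf

lemma UU_cons (Φ : ℝ) {n : ℕ} (a : ℤ) (v : Fin n → ℤ) :
    UU Φ (Fin.cons a v) = (a : ℝ) * Φ * UU Φ v - VV Φ v := by
  classical
  unfold VV UU
  rw [Finset.sum_filter, Finset.sum_filter, Finset.sum_filter, sum_split]
  set f : Fin (n + 1) → ℤ := Fin.cons a v with hf
  have hmap : (∑ J : Finset (Fin n),
      if ll1 (J.map (Fin.succEmb n)) then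
        (chi (((n+1 : ℕ) : ℤ) + 1 - (J.map (Fin.succEmb n)).card) : ℝ)
          * Φ ^ (J.map (Fin.succEmb n)).card
          * ((∏ j ∈ J.map (Fin.succEmb n), f j : ℤ) : ℝ)
      else 0)
      = - ∑ J : Finset (Fin n),
        if ll3 J then (chi ((n : ℤ) - J.card) : ℝ) * Φ ^ J.card * ((∏ j ∈ J, v j : ℤ) : ℝ)
        else 0 := by
    rw [← Finset.sum_neg_distrib]
    refine Finset.sum_congr rfl fun J _ => ?_
    rw [show -(if ll3 J then (chi ((n : ℤ) - J.card) : ℝ) * Φ ^ J.card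
          * ((∏ j ∈ J, v j : ℤ) : ℝ) else 0)
        = (if ll3 J then -((chi ((n : ℤ) - J.card) : ℝ) * Φ ^ J.card
          * ((∏ j ∈ J, v j : ℤ) : ℝ)) else 0) by
      split <;> simp]
    refine if_congr (ll1_map_iff J) ?_ rfl
    rw [Finset.card_map, hf, prod_cons_map]
    have harg : ((n+1 : ℕ) : ℤ) + 1 - J.card = ((n : ℤ) - J.card) + 2 := by push_cast; ring
    rw [harg, chi_add_two]
    push_cast
    ring
  have hins : (∑ J : Finset (Fin n),
      if ll1 (insert (0 : Fin (n+1)) (J.map (Fin.succEmb n))) then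
        (chi (((n+1 : ℕ) : ℤ) + 1 - (insert (0 : Fin (n+1)) (J.map (Fin.succEmb n))).card) : ℝ)
          * Φ ^ (insert (0 : Fin (n+1)) (J.map (Fin.succEmb n))).card
          * ((∏ j ∈ insert (0 : Fin (n+1)) (J.map (Fin.succEmb n)), f j : ℤ) : ℝ)
      else 0)
      = (a : ℝ) * Φ * ∑ J : Finset (Fin n),
        if ll1 J then (chi ((n : ℤ) + 1 - J.card) : ℝ) * Φ ^ J.card
          * ((∏ j ∈ J, v j : ℤ) : ℝ) else 0 := by
    rw [Finset.mul_sum]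
    refine Finset.sum_congr rfl fun J _ => ?_
    rw [mul_ite, mul_zero]
    refine if_congr (ll1_insert_iff J) ?_ rfl
    rw [Finset.card_insert_of_notMem (zero_not_mem_map J),
      Finset.prod_insert (zero_not_mem_map J), hf, prod_cons_map, Fin.cons_zero,
      Finset.card_map]
    have harg : ((n+1 : ℕ) : ℤ) + 1 - ((J.card + 1 : ℕ) : ℤ) = (n : ℤ) + 1 - J.card := by
      push_cast; ring
    rw [harg]
    push_cast
    ring
  rw [hmap, hins]
  ring

/-! ### matrix lemmas -/

lemma T_mul (x y : ℝ) : T x * T y = T (x + y) := by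
  simp [T, Matrix.mul_fin_two, add_comm]

lemma T_det (x : ℝ) : IsUnit (T x).det := by
  simp [T, Matrix.det_fin_two_of]

lemma T_inv (x : ℝ) : (T x)⁻¹ = T (-x) := by
  apply Matrix.inv_eq_right_inv
  rw [T_mul]
  simp [T, ← Matrix.one_fin_two]

lemma T_zpow (x : ℝ) (a : ℤ) : T x ^ a = T (a * x) := by
  induction a using Int.induction_on with
  | zero => simp [T, ← Matrix.one_fin_two]
  | succ k ih =>
    rw [Matrix.zpow_add_one (T_det x), ih, T_mul]
    norm_num
    ring_nf
  | pred k ih =>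
    rw [Matrix.zpow_sub_one (T_det x), ih, T_inv, T_mul]
    norm_num
    ring_nf

lemma M_cons (Φ : ℝ) (a : ℤ) (t : List ℤ) (ht : t ≠ []) :
    M Φ (a :: t) = T Φ ^ a * S * M Φ t := by
  cases t with
  | nil => exact absurd rfl ht
  | cons b t' => simp [M, List.prod_cons, mul_assoc]

lemma step_entries (Φ : ℝ) (a : ℤ) (N : Matrix (Fin 2) (Fin 2) ℝ) :
    (T Φ ^ a * S * N) 1 1 = N 0 1 ∧
    (T Φ ^ a * S * N) 0 1 = (a : ℝ) * Φ * N 0 1 - N 1 1 := by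
  rw [T_zpow, Matrix.eta_fin_two N]
  constructor <;> · simp [T, S, Matrix.mul_fin_two]; try ring

lemma M_single (Φ : ℝ) (a : ℤ) :
    M Φ [a] 0 1 = (a : ℝ) * Φ ∧ M Φ [a] 1 1 = 1 := by
  have h : M Φ [a] = T ((a : ℝ) * Φ) := by
    show T Φ ^ a * (List.map _ []).prod = _
    rw [List.map_nil, List.prod_nil, mul_one, T_zpow]
  rw [h]
  constructor <;> simp [T]

/-! ### main induction -/

lemma main_ind (Φ : ℝ) : ∀ n : ℕ, ∀ w : Fin (n + 1) → ℤ,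
    M Φ (List.ofFn w) 0 1 = UU Φ w ∧ M Φ (List.ofFn w) 1 1 = VV Φ w := by
  intro n
  induction n with
  | zero =>
    intro w
    have hofn : List.ofFn w = [w 0] := by
      rw [List.ofFn_succ]
      simp
    rw [hofn]
    obtain ⟨m1, m2⟩ := M_single Φ (w 0)
    constructor
    · rw [m1]
      conv_rhs => rw [← Fin.cons_self_tail w]
      rw [UU_cons, UU_empty, VV_empty]
      ring
    · rw [m2]
      conv_rhs => rw [← Fin.cons_self_tail w]
      rw [VV_cons, UU_empty]
  | succ n ih =>
    intro w
    have hofn : List.ofFn w = w 0 :: List.ofFn (Fin.tail w) := by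
      rw [List.ofFn_succ]
      rfl
    have hne : List.ofFn (Fin.tail w) ≠ [] := by
      intro h
      have hl := List.length_ofFn (f := Fin.tail w)
      rw [h] at hl
      simp at hl
    rw [hofn, M_cons Φ _ _ hne]
    obtain ⟨h1, h2⟩ := ih (Fin.tail w)
    obtain ⟨e1, e2⟩ := step_entries Φ (w 0) (M Φ (List.ofFn (Fin.tail w)))
    constructor
    · rw [e2, h1, h2]
      conv_rhs => rw [← Fin.cons_self_tail w]
      rw [UU_cons]
    · rw [e1, h1]
      conv_rhs => rw [← Fin.cons_self_tail w]
      rw [VV_cons]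

theorem stmt9 (Φ : ℝ) (hΦ : Φ ^ 2 = Φ + 1) (n : ℕ) (hn : 0 < n) (w : Fin n → ℤ) :
    M Φ (List.ofFn w) 1 1 =
      ((∑ J ∈ Finset.univ.filter (fun J : Finset (Fin n) => ll3 J),
          chi ((n : ℤ) - J.card) * fibz (J.card : ℤ) * ∏ j ∈ J, w j : ℤ) : ℝ) * Φ +
      ((∑ J ∈ Finset.univ.filter (fun J : Finset (Fin n) => ll3 J),
          chi ((n : ℤ) - J.card) * fibz ((J.card : ℤ) - 1) * ∏ j ∈ J, w j : ℤ) : ℝ) := by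
  obtain ⟨m, rfl⟩ : ∃ m, n = m + 1 := ⟨n - 1, by omega⟩
  rw [(main_ind Φ m w).2]
  unfold VV
  rw [Int.cast_sum, Int.cast_sum, Finset.sum_mul, ← Finset.sum_add_distrib]
  refine Finset.sum_congr rfl fun J _ => ?_
  rw [phi_pow Φ hΦ J.card]
  push_cast
  ring
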